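/- Define on Λ*(ℝ^{3n})* the nine operators e₀ = L_{01̄}, e₁ = L_{12̄}, e₂ = L_{1̄0̄}, f₀ = L_{0̄1}, f₁ = L_{1̄2}, f₂ = L_{10}, h₀ = L_{0̄0} − L_{1̄1}, h₁ = L_{1̄1} − L_{2̄2}, h₂ = L_{11̄} − L_{0̄0}. Then these satisfy the Chevalley–Serre relations of sl(4,ℝ): [eᵢ, fⱼ] = δᵢⱼ hᵢ, [eᵢ, hⱼ] = aᵢⱼ eᵢ, [fᵢ, hⱼ] = −aᵢⱼ fᵢ, where (aᵢⱼ) is the Cartan matrix of type A₃ (with rows/columns ordered so that a₀₀=a₁₁=a₂₂=2, a₀₁=a₁₀=−1, a₁₂=a₂₁ being appropriately −1 or 0 and a₀₂=a₂₀=0 as dictated by the computations: [e₀,h₀]=2e₀, [e₁,h₀]=−e₁, [e₂,h₀]=0, [e₀,h₁]=−e₀, [e₁,h₁]=2e₁, [e₂,h₁]=−e₂, [e₀,h₂]=0, [e₁,h₂]=−e₁, [e₂,h₂]=2e₂). -/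

import Mathlib

/-- The model space `ℝ^{3n}` with coordinates indexed by `(k, i)`, `k ∈ {0,1,2}`
labelling the groups `x, y¹, y²` and `i ∈ Fin n`. -/
abbrev Vsp (n : ℕ) := (Fin 3 × Fin n) → ℝ

/-- Operator indices `α ∈ {0,1,2,0̄,1̄,2̄}`: a label in `Fin 3` together with a Boolean
recording whether the index is barred (`true` = barred = contraction). -/
abbrev OpIdx := Bool × Fin 3

/-- The bar involution on operator indices. -/
def bar (α : OpIdx) : OpIdx := (!α.1, α.2)

/-- The operators `E^α_i` on the exterior algebra `Λ*(ℝ^{3n})*` (realized as the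
exterior algebra on the span of the coordinate covectors `dxᵢ, dy¹ᵢ, dy²ᵢ`, i.e. on
`ℝ^{3n}` with its standard basis): for `α` unbarred, wedge (left multiplication) with
the corresponding basis covector; for `α` barred, contraction (interior product) with
the dual basis vector. -/
noncomputable def Eop (n : ℕ) (α : OpIdx) (i : Fin n) :
    Module.End ℝ (ExteriorAlgebra ℝ (Vsp n)) :=
  if α.1 then
    CliffordAlgebra.contractLeft ((Pi.basisFun ℝ (Fin 3 × Fin n)).coord (α.2, i))
  else
    LinearMap.mulLeft ℝ (ExteriorAlgebra.ι ℝ (Pi.single (α.2, i) 1))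

/-- The operators `L_{αβ} = Σᵢ E^α_i E^β_i`. -/
noncomputable def Lop (n : ℕ) (α β : OpIdx) :
    Module.End ℝ (ExteriorAlgebra ℝ (Vsp n)) :=
  ∑ i, Eop n α i * Eop n β i

/-- Unbarred index. -/
def u (k : Fin 3) : OpIdx := (false, k)
/-- Barred index. -/
def b (k : Fin 3) : OpIdx := (true, k)

/-- The Chevalley generators `e₀, e₁, e₂`. -/
noncomputable def eGen (n : ℕ) : Fin 3 → Module.End ℝ (ExteriorAlgebra ℝ (Vsp n))
  | 0 => Lop n (u 0) (b 1)
  | 1 => Lop n (u 1) (b 2)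
  | 2 => Lop n (b 1) (b 0)

/-- The Chevalley generators `f₀, f₁, f₂`. -/
noncomputable def fGen (n : ℕ) : Fin 3 → Module.End ℝ (ExteriorAlgebra ℝ (Vsp n))
  | 0 => Lop n (b 0) (u 1)
  | 1 => Lop n (b 1) (u 2)
  | 2 => Lop n (u 1) (u 0)

/-- The Chevalley generators `h₀, h₁, h₂`. -/
noncomputable def hGen (n : ℕ) : Fin 3 → Module.End ℝ (ExteriorAlgebra ℝ (Vsp n))
  | 0 => Lop n (b 0) (u 0) - Lop n (b 1) (u 1)
  | 1 => Lop n (b 1) (u 1) - Lop n (b 2) (u 2)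
  | 2 => Lop n (u 1) (b 1) - Lop n (b 0) (u 0)

/-- The Cartan matrix of type `A₃` in the ordering dictated by the computations. -/
def cartanA3 : Matrix (Fin 3) (Fin 3) ℝ := !![2, -1, 0; -1, 2, -1; 0, -1, 2]

lemma Eop_bar (n : ℕ) (k : Fin 3) (i : Fin n) :
    Eop n (true, k) i
      = CliffordAlgebra.contractLeft ((Pi.basisFun ℝ (Fin 3 × Fin n)).coord (k, i)) := rfl

lemma Eop_unbar (n : ℕ) (k : Fin 3) (i : Fin n) :
    Eop n (false, k) i
      = LinearMap.mulLeft ℝ (ExteriorAlgebra.ι ℝ (Pi.single (k, i) 1)) := rfl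

lemma Eop_anti (n : ℕ) (α β : OpIdx) (i j : Fin n) :
    Eop n α i * Eop n β j + Eop n β j * Eop n α i
      = (if β = bar α ∧ j = i then (1:ℝ) else 0) • 1 := by
  obtain ⟨a, k⟩ := α
  obtain ⟨c, l⟩ := β
  match a, c with
  | false, false =>
      rw [if_neg (by simp [bar, Prod.ext_iff]), zero_smul, Eop_unbar, Eop_unbar]
      refine LinearMap.ext fun x => ?_
      simp only [LinearMap.add_apply, Module.End.mul_apply, LinearMap.mulLeft_apply,
        LinearMap.zero_apply]
      rw [← mul_assoc, ← mul_assoc, ← add_mul, ExteriorAlgebra.ι_add_mul_swap, zero_mul]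
  | true, true =>
      rw [if_neg (by simp [bar, Prod.ext_iff]), zero_smul, Eop_bar, Eop_bar]
      refine LinearMap.ext fun x => ?_
      simp only [LinearMap.add_apply, Module.End.mul_apply, LinearMap.zero_apply]
      have h := CliffordAlgebra.contractLeft_contractLeft
        (d := (Pi.basisFun ℝ (Fin 3 × Fin n)).coord (k, i)
              + (Pi.basisFun ℝ (Fin 3 × Fin n)).coord (l, j)) (x := x)
      simpa [map_add, LinearMap.add_apply, CliffordAlgebra.contractLeft_contractLeft,
        add_assoc, add_comm] using h
  | false, true =>
      rw [Eop_unbar, Eop_bar]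
      refine LinearMap.ext fun x => ?_
      simp only [LinearMap.add_apply, Module.End.mul_apply, LinearMap.mulLeft_apply,
        LinearMap.smul_apply, Module.End.one_apply]
      rw [CliffordAlgebra.contractLeft_ι_mul, add_sub_cancel]
      congr 1
      simp [bar, Module.Basis.coord_apply, Pi.basisFun_repr, Pi.single_apply, Prod.ext_iff,
        and_comm, eq_comm]
  | true, false =>
      rw [Eop_bar, Eop_unbar]
      refine LinearMap.ext fun x => ?_
      simp only [LinearMap.add_apply, Module.End.mul_apply, LinearMap.mulLeft_apply,
        LinearMap.smul_apply, Module.End.one_apply]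
      rw [CliffordAlgebra.contractLeft_ι_mul, sub_add_cancel]
      congr 1
      simp [bar, Module.Basis.coord_apply, Pi.basisFun_repr, Pi.single_apply, Prod.ext_iff,
        and_comm, eq_comm]

section Ring4
variable {R : Type*} [Ring R] [Algebra ℝ R]

lemma comm3 (X Y Z : R) (pp rr : ℝ) (h1 : Y*Z + Z*Y = pp • 1) (h2 : X*Z + Z*X = rr • 1) :
    (X*Y)*Z = pp • X - rr • Y + Z*(X*Y) := by
  have h1' : Y*Z = pp • 1 - Z*Y := eq_sub_of_add_eq h1
  have h2' : X*Z = rr • 1 - Z*X := eq_sub_of_add_eq h2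
  calc (X*Y)*Z = X*(Y*Z) := mul_assoc ..
    _ = X*(pp • 1 - Z*Y) := by rw [h1']
    _ = pp • X - (X*Z)*Y := by rw [mul_sub, mul_smul_comm, mul_one, mul_assoc]
    _ = pp • X - (rr • 1 - Z*X)*Y := by rw [h2']
    _ = pp • X - rr • Y + Z*(X*Y) := by
        rw [sub_mul, smul_mul_assoc, one_mul, mul_assoc]; abel

lemma comm4 {A B C D : R} {p q r s : ℝ}
    (hBC : B*C + C*B = p • 1) (hBD : B*D + D*B = q • 1)
    (hAC : A*C + C*A = r • 1) (hAD : A*D + D*A = s • 1) :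
    (A*B)*(C*D) - (C*D)*(A*B)
      = p • (A*D) - q • (A*C) + r • (D*B) - s • (C*B) := by
  have hBD' : B*D = q • 1 - D*B := eq_sub_of_add_eq hBD
  have hCA' : C*A = r • 1 - A*C := eq_sub_of_add_eq (by rw [add_comm]; exact hAC)
  have e1 : (A*B)*(C*D) = ((A*B)*C)*D := (mul_assoc ..).symm
  rw [e1, comm3 A B C p r hBC hAC, add_mul, sub_mul, smul_mul_assoc, smul_mul_assoc,
    mul_assoc C, comm3 A B D q s hBD hAD, mul_add, mul_sub, mul_smul_comm, mul_smul_comm,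
    ← mul_assoc C D, hBD', hCA']
  module

end Ring4

lemma collapse {M : Type*} [AddCommMonoid M] [Module ℝ M] {n : ℕ}
    (c : Prop) [Decidable c] (F : Fin n → Fin n → M) :
    ∑ i, ∑ j, (if c ∧ j = i then (1:ℝ) else 0) • F i j
      = (if c then (1:ℝ) else 0) • ∑ i, F i i := by
  by_cases hc : c
  · simp [hc, ite_smul]
  · simp [hc]

lemma Lop_comm (n : ℕ) (α β γ δ : OpIdx) :
    Lop n α β * Lop n γ δ - Lop n γ δ * Lop n α β
      = (if γ = bar β then (1:ℝ) else 0) • Lop n α δ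
        - (if δ = bar β then (1:ℝ) else 0) • Lop n α γ
        + (if γ = bar α then (1:ℝ) else 0) • Lop n δ β
        - (if δ = bar α then (1:ℝ) else 0) • Lop n γ β := by
  have step : ∀ i j : Fin n,
      (Eop n α i * Eop n β i) * (Eop n γ j * Eop n δ j)
        - (Eop n γ j * Eop n δ j) * (Eop n α i * Eop n β i)
      = (if γ = bar β ∧ j = i then (1:ℝ) else 0) • (Eop n α i * Eop n δ j)
        - (if δ = bar β ∧ j = i then (1:ℝ) else 0) • (Eop n α i * Eop n γ j)
        + (if γ = bar α ∧ j = i then (1:ℝ) else 0) • (Eop n δ j * Eop n β i)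
        - (if δ = bar α ∧ j = i then (1:ℝ) else 0) • (Eop n γ j * Eop n β i) :=
    fun i j => comm4 (Eop_anti n β γ i j) (Eop_anti n β δ i j)
      (Eop_anti n α γ i j) (Eop_anti n α δ i j)
  have lhs_eq : Lop n α β * Lop n γ δ - Lop n γ δ * Lop n α β
      = ∑ i, ∑ j, ((Eop n α i * Eop n β i) * (Eop n γ j * Eop n δ j)
        - (Eop n γ j * Eop n δ j) * (Eop n α i * Eop n β i)) := by
    unfold Lop
    rw [Finset.sum_mul_sum, Finset.sum_mul_sum, Finset.sum_comm (s := Finset.univ)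
      (t := Finset.univ) (f := fun j i => (Eop n γ j * Eop n δ j) * (Eop n α i * Eop n β i))]
    simp [Finset.sum_sub_distrib]
  rw [lhs_eq, Finset.sum_congr rfl fun i _ => Finset.sum_congr rfl fun j _ => step i j]
  simp only [Finset.sum_sub_distrib, Finset.sum_add_distrib, collapse]
  rfl

lemma Lop_self (n : ℕ) (α : OpIdx) : Lop n α α = 0 := by
  unfold Lop
  refine Finset.sum_eq_zero fun i _ => ?_
  have h := Eop_anti n α α i i
  rw [if_neg (by obtain ⟨a, k⟩ := α; simp [bar, Prod.ext_iff]), zero_smul] at h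
  have h2 : (2:ℝ) • (Eop n α i * Eop n α i) = 0 := by rw [two_smul]; exact h
  calc Eop n α i * Eop n α i = (2⁻¹ : ℝ) • ((2:ℝ) • (Eop n α i * Eop n α i)) := by
        rw [smul_smul]; norm_num
    _ = 0 := by rw [h2, smul_zero]

lemma Lop_diag (n : ℕ) (k : Fin 3) :
    Lop n (false, k) (true, k) = (n:ℝ) • 1 - Lop n (true, k) (false, k) := by
  refine eq_sub_of_add_eq ?_
  unfold Lop
  rw [← Finset.sum_add_distrib]
  have h : ∀ i : Fin n, Eop n (false, k) i * Eop n (true, k) i + Eop n (true, k) i * Eop n (false, k) i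
      = (1:ℝ) • (1 : Module.End ℝ (ExteriorAlgebra ℝ (Vsp n))) := by
    intro i
    have h := Eop_anti n (u k) (b k) i i
    rwa [if_pos ⟨rfl, rfl⟩] at h
  rw [Finset.sum_congr rfl fun i _ => h i]
  simp [Finset.sum_const, Nat.cast_smul_eq_nsmul]

set_option maxHeartbeats 1000000 in
/-- the operators `eᵢ, fᵢ, hᵢ` built from the `L_{αβ}` satisfy the
Chevalley–Serre relations of `sl(4,ℝ)`: `[eᵢ,fⱼ] = δᵢⱼ hᵢ`, `[eᵢ,hⱼ] = aᵢⱼ eᵢ`,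
`[fᵢ,hⱼ] = −aᵢⱼ fᵢ` for the Cartan matrix `(aᵢⱼ)` of type `A₃`. -/
theorem stmt_13 (n : ℕ) :
    (∀ i j : Fin 3,
        eGen n i * fGen n j - fGen n j * eGen n i = if i = j then hGen n i else 0)
      ∧ (∀ i j : Fin 3,
          eGen n i * hGen n j - hGen n j * eGen n i = cartanA3 i j • eGen n i)
      ∧ (∀ i j : Fin 3,
          fGen n i * hGen n j - hGen n j * fGen n i = -(cartanA3 i j) • fGen n i) := by
  have regroup : ∀ A X Y : Module.End ℝ (ExteriorAlgebra ℝ (Vsp n)),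
      A*X - A*Y - (X*A - Y*A) = (A*X - X*A) - (A*Y - Y*A) := fun A X Y => by abel
  refine ⟨?_, ?_, ?_⟩ <;> intro i j <;> fin_cases i <;> fin_cases j <;>
    simp only [eGen, fGen, hGen, Fin.zero_eta, Fin.mk_one, Fin.isValue] <;>
    (try rw [mul_sub, sub_mul, regroup]) <;>
    rw [Lop_comm] <;> (try rw [Lop_comm]) <;>
    simp only [u, b, bar, Bool.not_true, Bool.not_false, Prod.mk.injEq, Fin.isValue] <;>
    simp [Lop_self, cartanA3] <;>
    (try rw [Lop_diag n 0]) <;> (try rw [Lop_diag n 1]) <;> (try rw [Lop_diag n 2]) <;>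
    (try module)
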